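/- Induced Legendre duality on the restricted tangent and cotangent spaces: let Ψ* be a dissipation function on ℝ^E with conjugate Ψ and let S ∈ ℝ^{V×E}. For v ∈ Im S define Ψ̃(v) := min{Ψ(j) : j ∈ ℝ^E, −S j = v} (the minimum is attained and unique), and for u ∈ ℝ^V define Ψ̃*(u) := Ψ*(−Sᵀu). Then these functions are Legendre–Fenchel conjugate on the pairing of Im S with ℝ^V modulo Ker Sᵀ: for every v ∈ Im S, Ψ̃(v) = sup_{u ∈ ℝ^V} (⟨v,u⟩ − Ψ̃*(u)), and for every u ∈ ℝ^V, Ψ̃*(u) = sup_{v ∈ Im S} (⟨v,u⟩ − Ψ̃(v)). Moreover Ψ̃ is symmetric (Ψ̃(−v) = Ψ̃(v)) and Ψ̃(0) = 0. -/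

import Mathlib

open Matrix Filter Set

noncomputable def grad {n : ℕ} (F : (Fin n → ℝ) → ℝ) (x : Fin n → ℝ) : Fin n → ℝ :=
  fun i => fderiv ℝ F x (Pi.single i 1)

def IsDissipation {n : ℕ} (Ψ : (Fin n → ℝ) → ℝ) : Prop :=
  StrictConvexOn ℝ Set.univ Ψ ∧ ContDiff ℝ 1 Ψ ∧
  Tendsto (fun f => Ψ f / ‖f‖) (Bornology.cobounded (Fin n → ℝ)) atTop ∧
  (∀ f, Ψ (-f) = Ψ f) ∧ Ψ 0 = 0

noncomputable def legendre {n : ℕ} (Ψ : (Fin n → ℝ) → ℝ) (j : Fin n → ℝ) : ℝ :=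
  ⨆ f : Fin n → ℝ, (j ⬝ᵥ f - Ψ f)

noncomputable def breg {n : ℕ} (F : (Fin n → ℝ) → ℝ) (x x' : Fin n → ℝ) : ℝ :=
  F x - F x' - (x - x') ⬝ᵥ grad F x'

def posOrth (n : ℕ) : Set (Fin n → ℝ) := {x | ∀ i, 0 < x i}

def IsThermo {n : ℕ} (Φ : (Fin n → ℝ) → ℝ) : Prop :=
  StrictConvexOn ℝ (posOrth n) Φ ∧
  (∀ x ∈ posOrth n, DifferentiableAt ℝ Φ x) ∧
  Set.BijOn (grad Φ) (posOrth n) Set.univ ∧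
  (∀ xin ∈ posOrth n, ∀ xbd ∈ frontier {x : Fin n → ℝ | ∀ i, 0 ≤ x i},
    Tendsto (fun lam : ℝ => deriv (fun l : ℝ => Φ (l • xin + (1 - l) • xbd)) lam)
      (nhdsWithin 0 (Set.Ioi 0)) atBot)

/-- The induced primal dissipation function on the restricted tangent space:
Ψ̃(v) := inf{Ψ(j) : −S j = v}. -/
noncomputable def psiTilde {V E : ℕ} (S : Matrix (Fin V) (Fin E) ℝ)
    (Ψstar : (Fin E → ℝ) → ℝ) (v : Fin V → ℝ) : ℝ :=
  sInf (legendre Ψstar '' {j | -(S *ᵥ j) = v})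


namespace ID
open Bornology
variable {n : ℕ}

noncomputable def dotCLM (a : Fin n → ℝ) : (Fin n → ℝ) →L[ℝ] ℝ :=
  ∑ i, a i • ContinuousLinearMap.proj i

lemma dotCLM_apply (a f : Fin n → ℝ) : dotCLM a f = a ⬝ᵥ f := by
  simp [dotCLM, dotProduct, ContinuousLinearMap.sum_apply, mul_comm]

lemma fderiv_eq_grad_dot (F : (Fin n → ℝ) → ℝ) (x f : Fin n → ℝ) :
    fderiv ℝ F x f = grad F x ⬝ᵥ f := by
  have hsingle : ∀ i : Fin n, (fun j => if i = j then (1:ℝ) else 0) = Pi.single i 1 := by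
    intro i; funext j
    rw [Pi.single_apply]
    by_cases hij : i = j <;> simp [hij, eq_comm]
  conv_lhs => rw [pi_eq_sum_univ f, map_sum]
  simp only [_root_.map_smul, hsingle]
  simp [grad, dotProduct, mul_comm]

lemma hasDerivAt_line {F : (Fin n → ℝ) → ℝ} {x : Fin n → ℝ} (hd : DifferentiableAt ℝ F x)
    (d : Fin n → ℝ) :
    HasDerivAt (fun t : ℝ => F (x + t • d)) (fderiv ℝ F x d) 0 := by
  have h1 : HasDerivAt (fun t : ℝ => x + t • d) d 0 := by
    simpa using ((hasDerivAt_id (0:ℝ)).smul_const d).const_add x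
  have hdf : HasFDerivAt F (fderiv ℝ F x) ((fun t : ℝ => x + t • d) 0) := by
    simpa using hd.hasFDerivAt
  exact hdf.comp_hasDerivAt 0 h1

lemma grad_ineq {F : (Fin n → ℝ) → ℝ} (hconv : ConvexOn ℝ Set.univ F)
    (hd : Differentiable ℝ F) (x y : Fin n → ℝ) :
    F x + fderiv ℝ F x (y - x) ≤ F y := by
  have heq : (F ∘ (AffineMap.lineMap x y : ℝ →ᵃ[ℝ] (Fin n → ℝ)))
      = fun t : ℝ => F (x + t • (y - x)) := by
    funext t
    simp [AffineMap.lineMap_apply, vsub_eq_sub, vadd_eq_add, add_comm]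
  have key : ConvexOn ℝ Set.univ (fun t : ℝ => F (x + t • (y - x))) := by
    have := hconv.comp_affineMap (AffineMap.lineMap x y : ℝ →ᵃ[ℝ] (Fin n → ℝ))
    rw [heq] at this
    simpa using this
  have hder := hasDerivAt_line (hd x) (y - x)
  have hs := key.le_slope_of_hasDerivAt (Set.mem_univ 0) (Set.mem_univ 1) one_pos hder
  rw [slope_def_field] at hs
  simp only [one_smul, zero_smul, add_zero] at hs
  have h1 : x + (y - x) = y := by abel
  rw [h1] at hs
  have : fderiv ℝ F x (y - x) ≤ F y - F x := by
    have := hs; simp at this; linarith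
  linarith


variable {n : ℕ} {Ψ : (Fin n → ℝ) → ℝ}

lemma dot_le_sum_norm (j f : Fin n → ℝ) : j ⬝ᵥ f ≤ (∑ i, |j i|) * ‖f‖ := by
  rw [Finset.sum_mul]
  refine Finset.sum_le_sum fun i _ => ?_
  have h1 : j i * f i ≤ |j i| * |f i| := le_trans (le_abs_self _) (abs_mul _ _).le
  have h2 : |f i| ≤ ‖f‖ := by
    have := norm_le_pi_norm f i
    simpa [Real.norm_eq_abs] using this
  nlinarith [abs_nonneg (j i)]

lemma tendsto_sub_dot_atTop (h : IsDissipation Ψ) (j : Fin n → ℝ) :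
    Tendsto (fun f => Ψ f - j ⬝ᵥ f) (cocompact (Fin n → ℝ)) atTop := by
  rw [← Metric.cobounded_eq_cocompact]
  have hev1 : ∀ᶠ f in cobounded (Fin n → ℝ), (∑ i, |j i|) + 1 ≤ Ψ f / ‖f‖ :=
    h.2.2.1.eventually (eventually_ge_atTop _)
  have hev2 : ∀ᶠ f in cobounded (Fin n → ℝ), 1 ≤ ‖f‖ :=
    tendsto_norm_cobounded_atTop.eventually (eventually_ge_atTop 1)
  refine tendsto_atTop_mono' _ ((hev1.and hev2).mono ?_) tendsto_norm_cobounded_atTop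
  rintro f ⟨h1, h2⟩
  have hf0 : (0:ℝ) < ‖f‖ := lt_of_lt_of_le one_pos h2
  have hΨ : ((∑ i, |j i|) + 1) * ‖f‖ ≤ Ψ f := (le_div_iff₀ hf0).mp h1
  have hdot := dot_le_sum_norm j f
  have hexp : ((∑ i, |j i|) + 1) * ‖f‖ = (∑ i, |j i|) * ‖f‖ + ‖f‖ := by ring
  simp only []
  linarith

lemma tendsto_dot_sub_atBot (h : IsDissipation Ψ) (j : Fin n → ℝ) :
    Tendsto (fun f => j ⬝ᵥ f - Ψ f) (cocompact (Fin n → ℝ)) atBot := by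
  have := tendsto_neg_atTop_atBot.comp (tendsto_sub_dot_atTop h j)
  simpa [Function.comp_def, neg_sub] using this

lemma cont_dot_sub (h : IsDissipation Ψ) (j : Fin n → ℝ) :
    Continuous (fun f => j ⬝ᵥ f - Ψ f) := by
  have hdot : Continuous (fun f : Fin n → ℝ => j ⬝ᵥ f) := by
    have := (dotCLM j).continuous
    have he : ⇑(dotCLM j) = fun f : Fin n → ℝ => j ⬝ᵥ f := funext (dotCLM_apply j)
    rwa [he] at this
  exact hdot.sub (h.2.1.continuous)

lemma exists_max (h : IsDissipation Ψ) (j : Fin n → ℝ) :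
    ∃ f₀, ∀ f, j ⬝ᵥ f - Ψ f ≤ j ⬝ᵥ f₀ - Ψ f₀ :=
  (cont_dot_sub h j).exists_forall_ge (tendsto_dot_sub_atBot h j)

lemma bddAbove_range (h : IsDissipation Ψ) (j : Fin n → ℝ) :
    BddAbove (Set.range fun f => j ⬝ᵥ f - Ψ f) := by
  obtain ⟨f₀, hf₀⟩ := exists_max h j
  exact ⟨_, by rintro _ ⟨f, rfl⟩; exact hf₀ f⟩

lemma le_legendre (h : IsDissipation Ψ) (j f : Fin n → ℝ) :
    j ⬝ᵥ f - Ψ f ≤ legendre Ψ j :=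
  le_ciSup (bddAbove_range h j) f

lemma legendre_le {j : Fin n → ℝ} {c : ℝ} (hc : ∀ f, j ⬝ᵥ f - Ψ f ≤ c) :
    legendre Ψ j ≤ c :=
  ciSup_le hc

lemma psi_nonneg (h : IsDissipation Ψ) (f : Fin n → ℝ) : 0 ≤ Ψ f := by
  have hc := h.1.convexOn.2 (Set.mem_univ f) (Set.mem_univ (-f))
    (by norm_num : (0:ℝ) ≤ (2:ℝ)⁻¹) (by norm_num : (0:ℝ) ≤ (2:ℝ)⁻¹) (by norm_num)
  have hmid : (2:ℝ)⁻¹ • f + (2:ℝ)⁻¹ • (-f) = 0 := by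
    rw [smul_neg]; abel
  rw [hmid, h.2.2.2.2, h.2.2.2.1] at hc
  simp only [smul_eq_mul] at hc
  linarith

lemma legendre_nonneg (h : IsDissipation Ψ) (j : Fin n → ℝ) : 0 ≤ legendre Ψ j := by
  have := le_legendre h j 0
  simpa [h.2.2.2.2] using this

lemma legendre_zero (h : IsDissipation Ψ) : legendre Ψ 0 = 0 := by
  refine le_antisymm (legendre_le fun f => ?_) (legendre_nonneg h 0)
  have := psi_nonneg h f
  simp only [zero_dotProduct]
  linarith

lemma legendre_grad (h : IsDissipation Ψ) (g : Fin n → ℝ) :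
    legendre Ψ (grad Ψ g) = grad Ψ g ⬝ᵥ g - Ψ g := by
  refine le_antisymm (legendre_le fun f => ?_) (le_legendre h _ g)
  have hgi := grad_ineq h.1.convexOn (h.2.1.differentiable one_ne_zero) g f
  rw [fderiv_eq_grad_dot, dotProduct_sub] at hgi
  linarith

lemma grad_eq_of_subgrad (h : IsDissipation Ψ) {a x : Fin n → ℝ}
    (H : ∀ y, Ψ x + a ⬝ᵥ (y - x) ≤ Ψ y) : a = grad Ψ x := by
  have hmin : IsLocalMin (fun y => Ψ y - dotCLM a y) x := by
    refine Filter.Eventually.of_forall fun y => ?_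
    have := H y
    rw [dotProduct_sub] at this
    simp only [dotCLM_apply]
    linarith
  have hF : HasFDerivAt (fun y => Ψ y - dotCLM a y) (fderiv ℝ Ψ x - dotCLM a) x :=
    ((h.2.1.differentiable one_ne_zero x).hasFDerivAt).sub (dotCLM a).hasFDerivAt
  have h0 := hmin.hasFDerivAt_eq_zero hF
  funext i
  have := congrArg (fun L : (Fin n → ℝ) →L[ℝ] ℝ => L (Pi.single i 1)) h0
  simp only [ContinuousLinearMap.sub_apply, ContinuousLinearMap.zero_apply,
    dotCLM_apply, sub_eq_zero] at this
  show a i = fderiv ℝ Ψ x (Pi.single i 1)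
  rw [this, dotProduct_single, mul_one]

lemma legendre_strict_mid (h : IsDissipation Ψ) {a b : Fin n → ℝ} (hab : a ≠ b) :
    2 * legendre Ψ ((2:ℝ)⁻¹ • (a + b)) < legendre Ψ a + legendre Ψ b := by
  set m := (2:ℝ)⁻¹ • (a + b) with hm
  obtain ⟨f₀, hf₀⟩ := exists_max h m
  have hlm : legendre Ψ m = m ⬝ᵥ f₀ - Ψ f₀ :=
    le_antisymm (legendre_le hf₀) (le_legendre h m f₀)
  have hmdot : ∀ f, m ⬝ᵥ f = (2:ℝ)⁻¹ * (a ⬝ᵥ f) + (2:ℝ)⁻¹ * (b ⬝ᵥ f) := by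
    intro f; rw [hm, smul_dotProduct, add_dotProduct]; ring_nf
  by_contra hcon
  push_neg at hcon
  have hub : 2 * legendre Ψ m ≤ legendre Ψ a + legendre Ψ b := by
    have : legendre Ψ m ≤ (2:ℝ)⁻¹ * (legendre Ψ a + legendre Ψ b) := by
      refine legendre_le fun f => ?_
      have ha := le_legendre h a f
      have hb := le_legendre h b f
      rw [hmdot f]; linarith
    linarith
  have heq : legendre Ψ a + legendre Ψ b = 2 * legendre Ψ m := le_antisymm hcon hub
  have ha' := le_legendre h a f₀
  have hb' := le_legendre h b f₀
  have h2m : 2 * legendre Ψ m = (a ⬝ᵥ f₀ - Ψ f₀) + (b ⬝ᵥ f₀ - Ψ f₀) := by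
    rw [hlm, hmdot f₀]; ring
  have haeq : legendre Ψ a = a ⬝ᵥ f₀ - Ψ f₀ := by linarith
  have hbeq : legendre Ψ b = b ⬝ᵥ f₀ - Ψ f₀ := by linarith
  have hsa : a = grad Ψ f₀ := by
    refine grad_eq_of_subgrad h fun y => ?_
    have := le_legendre h a y
    rw [haeq] at this
    rw [dotProduct_sub]
    linarith
  have hsb : b = grad Ψ f₀ := by
    refine grad_eq_of_subgrad h fun y => ?_
    have := le_legendre h b y
    rw [hbeq] at this
    rw [dotProduct_sub]
    linarith
  exact hab (hsa.trans hsb.symm)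


variable {V E : ℕ} {Ψ : (Fin E → ℝ) → ℝ}

lemma dot_transfer (S : Matrix (Fin V) (Fin E) ℝ) (j : Fin E → ℝ) (u : Fin V → ℝ) :
    j ⬝ᵥ (Sᵀ *ᵥ u) = (S *ᵥ j) ⬝ᵥ u := by
  rw [Matrix.dotProduct_mulVec, Matrix.vecMul_transpose]

lemma weak_dual (h : IsDissipation Ψ) {S : Matrix (Fin V) (Fin E) ℝ} {v : Fin V → ℝ}
    {j : Fin E → ℝ} (hj : -(S *ᵥ j) = v) (u : Fin V → ℝ) :
    v ⬝ᵥ u - Ψ (-(Sᵀ *ᵥ u)) ≤ legendre Ψ j := by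
  have h1 := le_legendre h j (-(Sᵀ *ᵥ u))
  have hdot : j ⬝ᵥ (-(Sᵀ *ᵥ u)) = v ⬝ᵥ u := by
    rw [dotProduct_neg, dot_transfer, ← neg_dotProduct, hj]
  rwa [hdot] at h1

lemma exists_min_closed {α : Type*} [TopologicalSpace α] {f : α → ℝ} (hf : Continuous f)
    (hco : Tendsto f (cocompact α) atTop) {C : Set α} (hC : IsClosed C) {c : α} (hc : c ∈ C) :
    ∃ x ∈ C, ∀ y ∈ C, f x ≤ f y := by
  have hev : ∀ᶠ x in cocompact α, f c + 1 ≤ f x := hco.eventually (eventually_ge_atTop _)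
  obtain ⟨K, hK, hKs⟩ := mem_cocompact.mp hev
  have hK' : IsCompact ((K ∩ C) ∪ {c}) := (hK.inter_right hC).union isCompact_singleton
  obtain ⟨x₀, hx₀K, hx₀min⟩ := hK'.exists_isMinOn ⟨c, Or.inr rfl⟩ hf.continuousOn
  have hx₀min' := isMinOn_iff.mp hx₀min
  have hx₀C : x₀ ∈ C := by
    rcases hx₀K with h' | h'
    · exact h'.2
    · rw [Set.mem_singleton_iff] at h'; exact h' ▸ hc
  refine ⟨x₀, hx₀C, fun y hy => ?_⟩
  by_cases hyK : y ∈ K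
  · exact hx₀min' y (Or.inl ⟨hyK, hy⟩)
  · have h1 : f c + 1 ≤ f y := hKs hyK
    have h2 : f x₀ ≤ f c := hx₀min' c (Or.inr rfl)
    linarith

lemma core (h : IsDissipation Ψ) (S : Matrix (Fin V) (Fin E) ℝ) {v : Fin V → ℝ}
    (hv : v ∈ Set.range S.mulVec) :
    ∃ (j₀ : Fin E → ℝ) (u₀ : Fin V → ℝ), -(S *ᵥ j₀) = v ∧
      legendre Ψ j₀ = v ⬝ᵥ u₀ - Ψ (-(Sᵀ *ᵥ u₀)) ∧
      psiTilde S Ψ v = legendre Ψ j₀ := by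
  obtain ⟨w, hw⟩ := hv
  have hjf : -(S *ᵥ (-w)) = v := by rw [Matrix.mulVec_neg, neg_neg, hw]
  set jf : Fin E → ℝ := -w with hjfdef
  set W := Set.range (fun u : Fin V → ℝ => -(Sᵀ *ᵥ u)) with hWdef
  have hWclosed : IsClosed W := by
    have hWe : W = ↑(LinearMap.range (-(Sᵀ.mulVecLin))) := by
      rw [LinearMap.coe_range]
      rfl
    rw [hWe]
    exact Submodule.closed_of_finiteDimensional _
  have h0W : (0 : Fin E → ℝ) ∈ W := ⟨0, by simp⟩
  have hcont : Continuous (fun g : Fin E → ℝ => Ψ g - jf ⬝ᵥ g) := by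
    have hdot : Continuous (fun g : Fin E → ℝ => jf ⬝ᵥ g) := by
      have h1 := (dotCLM jf).continuous
      have he : ⇑(dotCLM jf) = fun g : Fin E → ℝ => jf ⬝ᵥ g := funext (dotCLM_apply jf)
      rwa [he] at h1
    exact h.2.1.continuous.sub hdot
  obtain ⟨g₀, hg₀W, hg₀min⟩ :=
    exists_min_closed hcont (tendsto_sub_dot_atTop h jf) hWclosed h0W
  obtain ⟨u₀, hu₀x⟩ := hg₀W
  have hu₀ : -(Sᵀ *ᵥ u₀) = g₀ := hu₀x
  set j₀ := grad Ψ g₀ with hj₀def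
  have hopt : ∀ u : Fin V → ℝ, fderiv ℝ Ψ g₀ (-(Sᵀ *ᵥ u)) = jf ⬝ᵥ (-(Sᵀ *ᵥ u)) := by
    intro u
    set wv := -(Sᵀ *ᵥ u) with hwv
    have hline : ∀ t : ℝ, g₀ + t • wv ∈ W := by
      intro t
      refine ⟨u₀ + t • u, ?_⟩
      show -(Sᵀ *ᵥ (u₀ + t • u)) = g₀ + t • wv
      rw [Matrix.mulVec_add, Matrix.mulVec_smul, neg_add, hu₀, ← smul_neg]
    have hmin0 : IsLocalMin (fun t : ℝ => Ψ (g₀ + t • wv) - jf ⬝ᵥ (g₀ + t • wv)) 0 := by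
      refine Filter.Eventually.of_forall fun t => ?_
      have h1 := hg₀min _ (hline t)
      simpa using h1
    have hder : HasDerivAt (fun t : ℝ => Ψ (g₀ + t • wv) - jf ⬝ᵥ (g₀ + t • wv))
        (fderiv ℝ Ψ g₀ wv - jf ⬝ᵥ wv) 0 := by
      have h1 := hasDerivAt_line (h.2.1.differentiable one_ne_zero g₀) wv
      have h2 : HasDerivAt (fun t : ℝ => jf ⬝ᵥ (g₀ + t • wv)) (jf ⬝ᵥ wv) 0 := by
        have he : (fun t : ℝ => jf ⬝ᵥ (g₀ + t • wv))
            = fun t : ℝ => (jf ⬝ᵥ g₀) + t * (jf ⬝ᵥ wv) := by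
          funext t
          rw [dotProduct_add, dotProduct_smul, smul_eq_mul]
        rw [he]
        simpa using ((hasDerivAt_id (0:ℝ)).mul_const (jf ⬝ᵥ wv)).const_add (jf ⬝ᵥ g₀)
      exact h1.sub h2
    have hz := hmin0.hasDerivAt_eq_zero hder
    linarith [hz, sub_eq_zero.mp hz]
  have hSj₀ : S *ᵥ j₀ = S *ᵥ jf := by
    funext k
    have h1 := hopt (Pi.single k 1)
    rw [fderiv_eq_grad_dot] at h1
    have e1 : ∀ x : Fin E → ℝ, x ⬝ᵥ (-(Sᵀ *ᵥ Pi.single k 1)) = -((S *ᵥ x) k) := by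
      intro x
      rw [dotProduct_neg, dot_transfer, dotProduct_single, mul_one]
    rw [e1, e1] at h1
    have := neg_injective h1
    exact this
  have hfeas : -(S *ᵥ j₀) = v := by rw [hSj₀, hjf]
  have h2 : j₀ ⬝ᵥ g₀ = v ⬝ᵥ u₀ := by
    rw [← hu₀, dotProduct_neg, dot_transfer, ← neg_dotProduct, hfeas]
  have hleg : legendre Ψ j₀ = v ⬝ᵥ u₀ - Ψ (-(Sᵀ *ᵥ u₀)) := by
    have h1 := legendre_grad h g₀
    rw [← hj₀def] at h1
    rw [h1, h2, hu₀]
  have hmin : ∀ j, -(S *ᵥ j) = v → legendre Ψ j₀ ≤ legendre Ψ j := by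
    intro j hj
    have h1 := weak_dual h hj u₀
    rwa [← hleg] at h1
  refine ⟨j₀, u₀, hfeas, hleg, ?_⟩
  refine le_antisymm (csInf_le ⟨0, ?_⟩ ⟨j₀, hfeas, rfl⟩) (le_csInf ⟨_, j₀, hfeas, rfl⟩ ?_)
  · rintro x ⟨j, hj, rfl⟩
    exact legendre_nonneg h j
  · rintro x ⟨j, hj, rfl⟩
    exact hmin j hj


end ID


/-- Induced Legendre duality on the restricted tangent and cotangent spaces:
the minimum defining Ψ̃ is attained at a unique point; Ψ̃ and Ψ̃*(u) := Ψ*(−Sᵀu) are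
Legendre–Fenchel conjugate over Im S and ℝ^V; Ψ̃ is symmetric and vanishes at 0. -/


theorem induced_duality_on_tangent_spaces {V E : ℕ}
    (S : Matrix (Fin V) (Fin E) ℝ)
    (Ψstar : (Fin E → ℝ) → ℝ) (h : IsDissipation Ψstar) :
    (∀ v ∈ Set.range S.mulVec, ∃ j : Fin E → ℝ,
      -(S *ᵥ j) = v ∧ legendre Ψstar j = psiTilde S Ψstar v ∧
      (∀ j' : Fin E → ℝ, -(S *ᵥ j') = v → j' ≠ j →
        psiTilde S Ψstar v < legendre Ψstar j')) ∧
    (∀ v ∈ Set.range S.mulVec,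
      psiTilde S Ψstar v = ⨆ u : Fin V → ℝ, (v ⬝ᵥ u - Ψstar (-(Sᵀ *ᵥ u)))) ∧
    (∀ u : Fin V → ℝ,
      Ψstar (-(Sᵀ *ᵥ u)) =
        ⨆ v : Set.range S.mulVec, ((v : Fin V → ℝ) ⬝ᵥ u - psiTilde S Ψstar v)) ∧
    (∀ v ∈ Set.range S.mulVec, psiTilde S Ψstar (-v) = psiTilde S Ψstar v) ∧
    psiTilde S Ψstar 0 = 0 := by
  have hbdd0 : ∀ v : Fin V → ℝ, ∀ x ∈ legendre Ψstar '' {j | -(S *ᵥ j) = v}, (0:ℝ) ≤ x := by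
    rintro v x ⟨j, hj, rfl⟩
    exact ID.legendre_nonneg h j
  -- Conclusion 1
  have c1 : ∀ v ∈ Set.range S.mulVec, ∃ j : Fin E → ℝ,
      -(S *ᵥ j) = v ∧ legendre Ψstar j = psiTilde S Ψstar v ∧
      (∀ j' : Fin E → ℝ, -(S *ᵥ j') = v → j' ≠ j →
        psiTilde S Ψstar v < legendre Ψstar j') := by
    intro v hv
    obtain ⟨j₀, u₀, hfeas, hleg, hpsit⟩ := ID.core h S hv
    refine ⟨j₀, hfeas, hpsit.symm, fun j' hj' hne => ?_⟩
    have hle : psiTilde S Ψstar v ≤ legendre Ψstar j' := by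
      rw [hpsit, hleg]
      exact ID.weak_dual h hj' u₀
    rcases lt_or_eq_of_le hle with hlt | heq
    · exact hlt
    · exfalso
      set m := (2:ℝ)⁻¹ • (j₀ + j') with hm
      have hmfeas : -(S *ᵥ m) = v := by
        rw [hm, Matrix.mulVec_smul, Matrix.mulVec_add, ← smul_neg, neg_add, hfeas, hj']
        funext k
        simp only [Pi.smul_apply, Pi.add_apply, smul_eq_mul]
        ring
      have hstrict := ID.legendre_strict_mid h (fun hEq => hne (hEq.symm)) (a := j₀) (b := j')
      have hminf : psiTilde S Ψstar v ≤ legendre Ψstar m :=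
        csInf_le ⟨0, hbdd0 v⟩ ⟨m, hmfeas, rfl⟩
      rw [← hm] at hstrict
      rw [hpsit] at hminf heq
      linarith
  -- Conclusion 2
  have c2 : ∀ v ∈ Set.range S.mulVec,
      psiTilde S Ψstar v = ⨆ u : Fin V → ℝ, (v ⬝ᵥ u - Ψstar (-(Sᵀ *ᵥ u))) := by
    intro v hv
    obtain ⟨j₀, u₀, hfeas, hleg, hpsit⟩ := ID.core h S hv
    have hbddF : BddAbove (Set.range fun u : Fin V → ℝ => v ⬝ᵥ u - Ψstar (-(Sᵀ *ᵥ u))) := by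
      refine ⟨legendre Ψstar j₀, ?_⟩
      rintro _ ⟨u, rfl⟩
      exact ID.weak_dual h hfeas u
    refine le_antisymm ?_ ?_
    · rw [hpsit, hleg]
      exact le_ciSup hbddF u₀
    · refine ciSup_le fun u => ?_
      rw [hpsit]
      exact ID.weak_dual h hfeas u
  refine ⟨c1, c2, ?_, ?_, ?_⟩
  -- Conclusion 3
  · intro u
    set g := -(Sᵀ *ᵥ u) with hg
    set js := grad Ψstar g with hjs
    have hfeasjs : -(S *ᵥ js) = S *ᵥ (-js) := by rw [Matrix.mulVec_neg]
    have hmem : S *ᵥ (-js) ∈ Set.range S.mulVec := ⟨-js, rfl⟩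
    haveI : Nonempty ↥(Set.range S.mulVec) := ⟨⟨S *ᵥ 0, 0, rfl⟩⟩
    have hbound : ∀ p : ↥(Set.range S.mulVec),
        (p : Fin V → ℝ) ⬝ᵥ u - psiTilde S Ψstar p ≤ Ψstar g := by
      rintro ⟨p, wp, hwp⟩
      have hfp : -(S *ᵥ (-wp)) = p := by rw [Matrix.mulVec_neg, neg_neg, hwp]
      have hge : (p : Fin V → ℝ) ⬝ᵥ u - Ψstar g ≤ psiTilde S Ψstar p := by
        refine le_csInf ⟨_, ⟨-wp, hfp, rfl⟩⟩ ?_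
        rintro x ⟨j, hj, rfl⟩
        rw [hg]
        exact ID.weak_dual h hj u
      simp only
      linarith
    have hbddG : BddAbove (Set.range fun p : ↥(Set.range S.mulVec) =>
        (p : Fin V → ℝ) ⬝ᵥ u - psiTilde S Ψstar p) := by
      refine ⟨Ψstar g, ?_⟩
      rintro _ ⟨p, rfl⟩
      exact hbound p
    have hlegjs : legendre Ψstar js = (S *ᵥ (-js)) ⬝ᵥ u - Ψstar g := by
      have h1 := ID.legendre_grad h g
      rw [← hjs] at h1
      have h2 : js ⬝ᵥ g = (S *ᵥ (-js)) ⬝ᵥ u := by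
        rw [hg, dotProduct_neg, ID.dot_transfer, ← neg_dotProduct, ← Matrix.mulVec_neg]
      rw [h1, h2]
    have hattain : Ψstar g ≤ (S *ᵥ (-js)) ⬝ᵥ u - psiTilde S Ψstar (S *ᵥ (-js)) := by
      have hps : psiTilde S Ψstar (S *ᵥ (-js)) ≤ legendre Ψstar js :=
        csInf_le ⟨0, hbdd0 _⟩ ⟨js, hfeasjs, rfl⟩
      rw [hlegjs] at hps
      linarith
    refine le_antisymm ?_ (ciSup_le hbound)
    exact le_trans hattain (le_ciSup hbddG ⟨S *ᵥ (-js), hmem⟩)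
  -- Conclusion 4
  · intro v hv
    obtain ⟨w, hw⟩ := hv
    have hv' : v ∈ Set.range S.mulVec := ⟨w, hw⟩
    have hnv : -v ∈ Set.range S.mulVec := ⟨-w, by rw [Matrix.mulVec_neg, hw]⟩
    rw [c2 v hv', c2 (-v) hnv]
    set F := fun t : Fin V → ℝ => v ⬝ᵥ t - Ψstar (-(Sᵀ *ᵥ t)) with hF
    set G := fun t : Fin V → ℝ => (-v) ⬝ᵥ t - Ψstar (-(Sᵀ *ᵥ t)) with hG
    have hGF : ∀ t, G t = F (-t) := by
      intro t
      rw [hF, hG]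
      simp only [neg_dotProduct, dotProduct_neg, Matrix.mulVec_neg, neg_neg]
      rw [h.2.2.2.1 (Sᵀ *ᵥ t)]
    obtain ⟨jv, uv, hfv, _, _⟩ := ID.core h S hv'
    obtain ⟨jnv, unv, hfnv, _, _⟩ := ID.core h S hnv
    have hbddF : BddAbove (Set.range F) := by
      refine ⟨legendre Ψstar jv, ?_⟩
      rintro _ ⟨t, rfl⟩
      exact ID.weak_dual h hfv t
    have hbddG : BddAbove (Set.range G) := by
      refine ⟨legendre Ψstar jnv, ?_⟩
      rintro _ ⟨t, rfl⟩
      exact ID.weak_dual h hfnv t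
    refine le_antisymm (ciSup_le fun t => ?_) (ciSup_le fun t => ?_)
    · rw [hGF t]
      exact le_ciSup hbddF (-t)
    · have : F t = G (-t) := by rw [hGF (-t), neg_neg]
      rw [this]
      exact le_ciSup hbddG (-t)
  -- Conclusion 5
  · have hmem0 : (0 : Fin E → ℝ) ∈ {j | -(S *ᵥ j) = (0 : Fin V → ℝ)} := by
      simp [Matrix.mulVec_zero]
    refine le_antisymm ?_ (le_csInf ⟨_, 0, hmem0, rfl⟩ (hbdd0 0))
    have := csInf_le ⟨0, hbdd0 0⟩ ⟨0, hmem0, rfl⟩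
    rwa [ID.legendre_zero h] at this
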